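/- Let X be a compact metric space, N ≥ 2, K > 0, and let G : X^{N−1} → ℝ be symmetric and satisfy |G(x_{-i}) − G(y_{-i})| ≤ K W_1((1/(N−1)) Σ_{j≠i} δ_{x_j}, (1/(N−1)) Σ_{j≠i} δ_{y_j}) for all x_{-i}, y_{-i} ∈ X^{N−1}. Then for all (π_j)_{j≠i}, (η_j)_{j≠i} in P(X)^{N−1}: |∫_{X^{N−1}} G ⊗_{j≠i} π_j(dx_j) − ∫_{X^{N−1}} G ⊗_{j≠i} η_j(dx_j)| ≤ K min_{σ ∈ S_{N−1}} (1/(N−1)) Σ_{j≠i} W_1(π_j, η_{σ(j)}), where S_{N−1} is the set of permutations of the indices j ≠ i. -/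

import Mathlib

open MeasureTheory
open scoped ENNReal NNReal

/-- The set of transport plans (couplings) between two probability measures. -/
def Couplings {Θ X : Type*} [MeasurableSpace Θ] [MeasurableSpace X]
    (μ : Measure Θ) (ν : Measure X) : Set (Measure (Θ × X)) :=
  {γ | IsProbabilityMeasure γ ∧ γ.map Prod.fst = μ ∧ γ.map Prod.snd = ν}

/-- The value of the Monge-Kantorovich optimal transport problem for the cost `c`. -/
noncomputable def transportCost {Θ X : Type*} [MeasurableSpace Θ] [MeasurableSpace X]
    (c : Θ → X → ℝ) (μ : Measure Θ) (ν : Measure X) : ℝ :=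
  sInf ((fun γ => ∫ p, c p.1 p.2 ∂γ) '' Couplings μ ν)

/-- The 1-Wasserstein distance. -/
noncomputable def W1 {X : Type*} [MeasurableSpace X] [PseudoMetricSpace X]
    (μ ν : Measure X) : ℝ :=
  transportCost (fun x y => dist x y) μ ν

section Aux
variable {X : Type*} [MetricSpace X] [CompactSpace X] [MeasurableSpace X] [BorelSpace X]

lemma prod_mem_couplings (μ ν : Measure X) [IsProbabilityMeasure μ] [IsProbabilityMeasure ν] :
    μ.prod ν ∈ Couplings μ ν := by
  refine ⟨inferInstance, ?_, ?_⟩ <;> simp [Measure.map_fst_prod, Measure.map_snd_prod]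

lemma couplings_bddBelow (μ ν : Measure X) :
    BddBelow ((fun γ => ∫ p : X × X, dist p.1 p.2 ∂γ) '' Couplings μ ν) := by
  refine ⟨0, ?_⟩
  rintro x ⟨γ, -, rfl⟩
  exact integral_nonneg fun p => dist_nonneg

/-- Lipschitz functions integrate against W1. -/
lemma abs_integral_sub_le_W1 (L : ℝ) (hL : 0 < L) (f : X → ℝ)
    (hf : ∀ x y, |f x - f y| ≤ L * dist x y)
    (μ ν : Measure X) [IsProbabilityMeasure μ] [IsProbabilityMeasure ν] :
    |∫ x, f x ∂μ - ∫ x, f x ∂ν| ≤ L * W1 μ ν := by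
  have hfc : Continuous f := by
    have : LipschitzWith L.toNNReal f := by
      apply LipschitzWith.of_dist_le_mul
      intro x y
      rw [Real.dist_eq, Real.coe_toNNReal _ hL.le]
      exact hf x y
    exact this.continuous
  have key : ∀ γ ∈ Couplings μ ν, |∫ x, f x ∂μ - ∫ x, f x ∂ν| ≤ L * ∫ p : X × X, dist p.1 p.2 ∂γ := by
    rintro γ ⟨hγ, h1, h2⟩
    have hi1 : ∫ x, f x ∂μ = ∫ p : X × X, f p.1 ∂γ :=
      h1 ▸ integral_map measurable_fst.aemeasurable hfc.aestronglyMeasurable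
    have hi2 : ∫ x, f x ∂ν = ∫ p : X × X, f p.2 ∂γ :=
      h2 ▸ integral_map measurable_snd.aemeasurable hfc.aestronglyMeasurable
    have int1 : Integrable (fun p : X × X => f p.1) γ :=
      (hfc.comp continuous_fst).integrable_of_hasCompactSupport
        (HasCompactSupport.of_compactSpace _)
    have int2 : Integrable (fun p : X × X => f p.2) γ :=
      (hfc.comp continuous_snd).integrable_of_hasCompactSupport
        (HasCompactSupport.of_compactSpace _)
    have intd : Integrable (fun p : X × X => dist p.1 p.2) γ :=
      (continuous_fst.dist continuous_snd).integrable_of_hasCompactSupport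
        (HasCompactSupport.of_compactSpace _)
    rw [hi1, hi2, ← integral_sub int1 int2]
    calc |∫ p : X × X, (f p.1 - f p.2) ∂γ| ≤ ∫ p : X × X, |f p.1 - f p.2| ∂γ :=
          by
          simpa [Real.norm_eq_abs] using norm_integral_le_integral_norm (μ := γ) (fun p : X × X => f p.1 - f p.2)
      _ ≤ ∫ p : X × X, L * dist p.1 p.2 ∂γ := by
          apply integral_mono (int1.sub int2).abs (intd.const_mul L)
          intro p; exact hf p.1 p.2
      _ = L * ∫ p : X × X, dist p.1 p.2 ∂γ := integral_const_mul L _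
  have hne : ((fun γ => ∫ p : X × X, dist p.1 p.2 ∂γ) '' Couplings μ ν).Nonempty :=
    ⟨_, Set.mem_image_of_mem _ (prod_mem_couplings μ ν)⟩
  have h : |∫ x, f x ∂μ - ∫ x, f x ∂ν| / L ≤ sInf ((fun γ => ∫ p : X × X, dist p.1 p.2 ∂γ) '' Couplings μ ν) := by
    apply le_csInf hne
    rintro b ⟨γ, hγ, rfl⟩
    rw [div_le_iff₀ hL]
    simpa [mul_comm] using key γ hγ
  rw [W1, transportCost]
  calc |∫ x, f x ∂μ - ∫ x, f x ∂ν| = L * (|∫ x, f x ∂μ - ∫ x, f x ∂ν| / L) := by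
        field_simp
    _ ≤ L * _ := by apply mul_le_mul_of_nonneg_left h hL.le

lemma measure_map_finset_sum {α β ι : Type*} [MeasurableSpace α] [MeasurableSpace β]
    (s : Finset ι) (μ : ι → Measure α) {f : α → β} (hf : Measurable f) :
    (∑ i ∈ s, μ i).map f = ∑ i ∈ s, (μ i).map f := by
  classical
  induction s using Finset.induction with
  | empty => simp
  | insert _ _ h ih => rw [Finset.sum_insert h, Finset.sum_insert h, Measure.map_add _ _ hf, ih]

lemma W1_empirical_le (n : ℕ) (hn : 1 ≤ n) (z w : Fin n → X) :
    W1 ((n : ℝ≥0∞)⁻¹ • ∑ j : Fin n, Measure.dirac (z j))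
       ((n : ℝ≥0∞)⁻¹ • ∑ j : Fin n, Measure.dirac (w j)) ≤
      (n : ℝ)⁻¹ * ∑ j : Fin n, dist (z j) (w j) := by
  have hn0 : (n : ℝ≥0∞) ≠ 0 := by simp; omega
  set γ : Measure (X × X) := (n : ℝ≥0∞)⁻¹ • ∑ j : Fin n, Measure.dirac (z j, w j) with hγ
  have hprob : IsProbabilityMeasure γ := by
    constructor
    simp [hγ, Measure.smul_apply, smul_eq_mul, ENNReal.inv_mul_cancel hn0 (by simp)]
  have hmem : γ ∈ Couplings ((n : ℝ≥0∞)⁻¹ • ∑ j : Fin n, Measure.dirac (z j))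
      ((n : ℝ≥0∞)⁻¹ • ∑ j : Fin n, Measure.dirac (w j)) := by
    refine ⟨hprob, ?_, ?_⟩ <;>
    · rw [hγ, Measure.map_smul, measure_map_finset_sum _ _ (by measurability)]
      simp [Measure.map_dirac', measurable_fst, measurable_snd]
  have hval : ∫ p : X × X, dist p.1 p.2 ∂γ = (n : ℝ)⁻¹ * ∑ j : Fin n, dist (z j) (w j) := by
    rw [hγ, integral_smul_measure, integral_finset_sum_measure (fun j _ => ?_)]
    · simp [integral_dirac, ENNReal.toReal_inv, smul_eq_mul]
    · exact (continuous_fst.dist continuous_snd).integrable_of_hasCompactSupport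
        (HasCompactSupport.of_compactSpace _)
  calc W1 _ _ ≤ ∫ p : X × X, dist p.1 p.2 ∂γ :=
        csInf_le (couplings_bddBelow _ _) ⟨γ, hmem, rfl⟩
    _ = _ := hval

lemma swap_one {m : ℕ} (L : ℝ) (hL : 0 < L) (G : (Fin (m+1) → X) → ℝ) (hGc : Continuous G)
    (hGL : ∀ z w : Fin (m+1) → X, |G z - G w| ≤ L * ∑ j, dist (z j) (w j))
    (i : Fin (m+1)) (μ ν : Fin (m+1) → Measure X)
    (hμ : ∀ j, IsProbabilityMeasure (μ j)) (hν : ∀ j, IsProbabilityMeasure (ν j))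
    (hagree : ∀ j, j ≠ i → μ j = ν j) :
    |∫ z, G z ∂Measure.pi μ - ∫ z, G z ∂Measure.pi ν| ≤ L * W1 (μ i) (ν i) := by
  haveI := hμ; haveI := hν
  haveI := hμ i; haveI := hν i
  set R : Measure (Fin m → X) := Measure.pi fun j => μ (i.succAbove j) with hR
  haveI : IsProbabilityMeasure R := by rw [hR]; infer_instance
  have hRν : (Measure.pi fun j => ν (i.succAbove j)) = R := by
    rw [hR]; exact congrArg Measure.pi (funext fun j => (hagree _ (Fin.succAbove_ne i j)).symm)
  set e := MeasurableEquiv.piFinSuccAbove (fun _ : Fin (m+1) => X) i with he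
  have hesymm : ∀ p : X × (Fin m → X), e.symm p = i.insertNth p.1 p.2 := fun p => rfl
  have hesc : Continuous fun p : X × (Fin m → X) => G (e.symm p) := by
    simp only [hesymm]
    exact hGc.comp (Continuous.finInsertNth (A := fun _ : Fin (m+1) => X) i continuous_fst continuous_snd)
  have keyint : ∀ (κ : Fin (m+1) → Measure X), (∀ j, IsProbabilityMeasure (κ j)) →
      ∫ z, G z ∂Measure.pi κ
        = ∫ p, G (e.symm p) ∂((κ i).prod (Measure.pi fun j => κ (i.succAbove j))) := by
    intro κ hκ
    haveI := hκ
    exact ((measurePreserving_piFinSuccAbove κ i).symm e).integral_comp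
      e.symm.measurableEmbedding G |>.symm
  set F : X → ℝ := fun x => ∫ y, G (i.insertNth x y) ∂ R with hF
  have hswap : ∀ (κ : Measure X), IsProbabilityMeasure κ →
      ∫ p, G (e.symm p) ∂(κ.prod R) = ∫ x, F x ∂κ := by
    intro κ hκ
    haveI := hκ
    rw [integral_prod _ (hesc.integrable_of_hasCompactSupport
      (HasCompactSupport.of_compactSpace _))]
    simp only [hesymm, hF]
  have hFlip : ∀ x x' : X, |F x - F x'| ≤ L * dist x x' := by
    intro x x'
    have i1 : Integrable (fun y => G (i.insertNth x y)) R :=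
      (hGc.comp (Continuous.finInsertNth (A := fun _ : Fin (m+1) => X) i continuous_const continuous_id)).integrable_of_hasCompactSupport
        (HasCompactSupport.of_compactSpace _)
    have i2 : Integrable (fun y => G (i.insertNth x' y)) R :=
      (hGc.comp (Continuous.finInsertNth (A := fun _ : Fin (m+1) => X) i continuous_const continuous_id)).integrable_of_hasCompactSupport
        (HasCompactSupport.of_compactSpace _)
    rw [hF, ← integral_sub i1 i2]
    calc |∫ y, (G (i.insertNth x y) - G (i.insertNth x' y)) ∂ R|
        ≤ ∫ y, |G (i.insertNth x y) - G (i.insertNth x' y)| ∂ R := by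
          simpa [Real.norm_eq_abs] using norm_integral_le_integral_norm (μ := R)
            (fun y => G (i.insertNth x y) - G (i.insertNth x' y))
      _ ≤ ∫ _y, L * dist x x' ∂ R := by
          apply integral_mono ((i1.sub i2).abs) (integrable_const _)
          intro y
          have := hGL (i.insertNth x y) (i.insertNth x' y)
          have hsum : ∑ j, dist ((i.insertNth x y : Fin (m+1) → X) j) ((i.insertNth x' y : Fin (m+1) → X) j) = dist x x' := by
            rw [Fin.sum_univ_succAbove
              (fun j => dist ((i.insertNth x y : Fin (m+1) → X) j) ((i.insertNth x' y : Fin (m+1) → X) j)) i]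
            simp
          rw [hsum] at this
          exact this
      _ = L * dist x x' := by simp
  calc |∫ z, G z ∂Measure.pi μ - ∫ z, G z ∂Measure.pi ν|
      = |∫ x, F x ∂(μ i) - ∫ x, F x ∂(ν i)| := by
        rw [keyint μ hμ, keyint ν hν, hRν, ← hR, hswap _ (hμ i), hswap _ (hν i)]
    _ ≤ L * W1 (μ i) (ν i) := abs_integral_sub_le_W1 L hL F hFlip _ _

lemma integral_pi_perm {n : ℕ} (G : (Fin n → X) → ℝ)
    (hsym : ∀ (σ : Equiv.Perm (Fin n)) (z : Fin n → X), G (z ∘ σ) = G z)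
    (q : Fin n → Measure X) (hq : ∀ j, IsProbabilityMeasure (q j)) (σ : Equiv.Perm (Fin n)) :
    ∫ z, G z ∂Measure.pi (fun j => q (σ j)) = ∫ z, G z ∂Measure.pi q := by
  haveI := hq
  have hMP := measurePreserving_piCongrLeft (fun j => q j) (σ : Fin n ≃ Fin n)
  have h := hMP.integral_comp (MeasurableEquiv.piCongrLeft (fun _ : Fin n => X) σ).measurableEmbedding G
  rw [← h]
  congr 1
  funext z
  have hz : (MeasurableEquiv.piCongrLeft (fun _ : Fin n => X) σ) z = z ∘ σ.symm := by
    funext j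
    simp [MeasurableEquiv.piCongrLeft, Equiv.piCongrLeft]
  rw [hz, hsym σ.symm z]

end Aux

/-- **Estimate on product integrals of symmetric empirical-Lipschitz functions.**
If `G : X^{N-1} → ℝ` (here `n = N - 1 ≥ 1`) is symmetric and satisfies
`|G z - G w| ≤ K W₁(emp z, emp w)` where `emp z = (1/n) Σⱼ δ_{zⱼ}`, then for all
probability measures `(pⱼ)`, `(qⱼ)` on `X`,
`|∫ G d(⊗ⱼ pⱼ) - ∫ G d(⊗ⱼ qⱼ)| ≤ K min_σ (1/n) Σⱼ W₁(pⱼ, q_{σ(j)})`. -/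
theorem abs_integral_pi_sub_le_min_perm
    {X : Type*} [MetricSpace X] [CompactSpace X] [MeasurableSpace X] [BorelSpace X]
    (n : ℕ) (hn : 1 ≤ n) (K : ℝ) (hK : 0 < K)
    (G : (Fin n → X) → ℝ)
    (hsym : ∀ (σ : Equiv.Perm (Fin n)) (z : Fin n → X), G (z ∘ σ) = G z)
    (hG : ∀ z w : Fin n → X,
      |G z - G w| ≤ K * W1 ((n : ℝ≥0∞)⁻¹ • ∑ j : Fin n, Measure.dirac (z j))
                           ((n : ℝ≥0∞)⁻¹ • ∑ j : Fin n, Measure.dirac (w j)))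
    (p q : Fin n → Measure X)
    (hp : ∀ j, IsProbabilityMeasure (p j)) (hq : ∀ j, IsProbabilityMeasure (q j)) :
    |(∫ z, G z ∂(Measure.pi p)) - ∫ z, G z ∂(Measure.pi q)| ≤
      K * ⨅ σ : Equiv.Perm (Fin n), (n : ℝ)⁻¹ * ∑ j : Fin n, W1 (p j) (q (σ j)) := by

  obtain ⟨m, rfl⟩ : ∃ m, n = m + 1 := ⟨n - 1, by omega⟩
  haveI := hp; haveI := hq
  set L : ℝ := K * (((m+1 : ℕ) : ℝ))⁻¹ with hLdef
  have hL0 : 0 < L := by positivity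
  have hGL : ∀ z w : Fin (m+1) → X, |G z - G w| ≤ L * ∑ j, dist (z j) (w j) := by
    intro z w
    calc |G z - G w| ≤ K * W1 _ _ := hG z w
      _ ≤ K * ((((m+1 : ℕ) : ℝ))⁻¹ * ∑ j, dist (z j) (w j)) :=
          mul_le_mul_of_nonneg_left (W1_empirical_le (m+1) (by omega) z w) hK.le
      _ = L * ∑ j, dist (z j) (w j) := by rw [hLdef]; ring
  have hGc : Continuous G := by
    have : LipschitzWith (Real.toNNReal (L * (m+1))) G := by
      apply LipschitzWith.of_dist_le_mul
      intro z w
      rw [Real.dist_eq, Real.coe_toNNReal _ (by positivity)]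
      calc |G z - G w| ≤ L * ∑ j, dist (z j) (w j) := hGL z w
        _ ≤ L * ∑ _j : Fin (m+1), dist z w := by
            apply mul_le_mul_of_nonneg_left _ hL0.le
            exact Finset.sum_le_sum fun j _ => dist_le_pi_dist z w j
        _ = L * (m+1) * dist z w := by
            rw [Finset.sum_const, Finset.card_univ]
            simp [nsmul_eq_mul]; ring
    exact this.continuous
  open Fin.NatCast in
  have main : ∀ σ : Equiv.Perm (Fin (m+1)),
      |∫ z, G z ∂Measure.pi p - ∫ z, G z ∂Measure.pi q| ≤
        K * ((((m+1 : ℕ) : ℝ))⁻¹ * ∑ j : Fin (m+1), W1 (p j) (q (σ j))) := by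
    intro σ
    classical
    set μk : ℕ → Fin (m+1) → Measure X := fun k j => if (j : ℕ) < k then q (σ j) else p j
      with hμk
    have hμkprob : ∀ k j, IsProbabilityMeasure (μk k j) := by
      intro k j; rw [hμk]; dsimp only; split <;> infer_instance
    have h0 : μk 0 = p := by funext j; simp [hμk]
    have hlast : μk (m+1) = fun j => q (σ j) := by funext j; simp [hμk, j.isLt]
    have hstep : ∀ k : ℕ, k < m + 1 →
        |∫ z, G z ∂Measure.pi (μk k) - ∫ z, G z ∂Measure.pi (μk (k+1))| ≤
          L * W1 (p ((k : Fin (m+1)))) (q (σ ((k : Fin (m+1))))) := by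
      intro k hk
      set i : Fin (m+1) := (k : Fin (m+1)) with hi
      have hival : (i : ℕ) = k := Fin.val_cast_of_lt hk
      have hagree : ∀ j, j ≠ i → μk k j = μk (k+1) j := by
        intro j hj
        have hjk : (j : ℕ) ≠ k := by
          intro h; exact hj (Fin.ext (by rw [hival, h]))
        rw [hμk]; dsimp only
        rcases lt_or_ge (j : ℕ) k with h | h
        · rw [if_pos h, if_pos (by omega)]
        · rw [if_neg (by omega), if_neg (by omega)]
      have hvals1 : μk k i = p i := by rw [hμk]; dsimp only; rw [if_neg (by omega)]
      have hvals2 : μk (k+1) i = q (σ i) := by rw [hμk]; dsimp only; rw [if_pos (by omega)]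
      have := swap_one L hL0 G hGc hGL i (μk k) (μk (k+1)) (hμkprob _) (hμkprob _) hagree
      rw [hvals1, hvals2] at this
      exact this
    have hsymint : ∫ z, G z ∂Measure.pi (fun j => q (σ j)) = ∫ z, G z ∂Measure.pi q :=
      integral_pi_perm G hsym q hq σ
    have tele : ∫ z, G z ∂Measure.pi p - ∫ z, G z ∂Measure.pi (fun j => q (σ j))
        = ∑ k ∈ Finset.range (m+1),
            (∫ z, G z ∂Measure.pi (μk k) - ∫ z, G z ∂Measure.pi (μk (k+1))) := by
      rw [Finset.sum_range_sub' (fun k => ∫ z, G z ∂Measure.pi (μk k)), h0, hlast]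
    calc |∫ z, G z ∂Measure.pi p - ∫ z, G z ∂Measure.pi q|
        = |∫ z, G z ∂Measure.pi p - ∫ z, G z ∂Measure.pi (fun j => q (σ j))| := by
          rw [hsymint]
      _ = |∑ k ∈ Finset.range (m+1),
            (∫ z, G z ∂Measure.pi (μk k) - ∫ z, G z ∂Measure.pi (μk (k+1)))| := by rw [tele]
      _ ≤ ∑ k ∈ Finset.range (m+1),
            |∫ z, G z ∂Measure.pi (μk k) - ∫ z, G z ∂Measure.pi (μk (k+1))| :=
          Finset.abs_sum_le_sum_abs _ _
      _ ≤ ∑ k ∈ Finset.range (m+1),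
            L * W1 (p ((k : Fin (m+1)))) (q (σ ((k : Fin (m+1))))) :=
          Finset.sum_le_sum fun k hk => hstep k (Finset.mem_range.mp hk)
      _ = ∑ j : Fin (m+1), L * W1 (p j) (q (σ j)) := by
          rw [← Fin.sum_univ_eq_sum_range (fun k =>
            L * W1 (p ((k : Fin (m+1)))) (q (σ ((k : Fin (m+1)))))) (m+1)]
          exact Finset.sum_congr rfl fun j _ => by rw [Fin.cast_val_eq_self]
      _ = K * ((((m+1 : ℕ) : ℝ))⁻¹ * ∑ j : Fin (m+1), W1 (p j) (q (σ j))) := by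
          rw [← Finset.mul_sum, hLdef]; ring
  obtain ⟨σ₀, hσ₀⟩ := Finite.exists_min
    (fun σ : Equiv.Perm (Fin (m+1)) => (((m+1 : ℕ) : ℝ))⁻¹ * ∑ j : Fin (m+1), W1 (p j) (q (σ j)))
  have hinf : (⨅ σ : Equiv.Perm (Fin (m+1)),
      (((m+1 : ℕ) : ℝ))⁻¹ * ∑ j : Fin (m+1), W1 (p j) (q (σ j)))
      = (((m+1 : ℕ) : ℝ))⁻¹ * ∑ j : Fin (m+1), W1 (p j) (q (σ₀ j)) := by
    apply le_antisymm
    · exact ciInf_le (Set.Finite.bddBelow (Set.finite_range _)) σ₀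
    · exact le_ciInf hσ₀
  rw [hinf]
  exact main σ₀
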